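/- The sign representation of S_n occurs in the conjugation representation ℂC_μ on the conjugacy class of cycle type μ if and only if all elements of the centraliser of any element of C_μ are even permutations, which holds if and only if μ is a partition of n into distinct odd parts; moreover when it occurs, its multiplicity is exactly one. -/

import Mathlib

/-- The conjugation representation of `S_n` on the span of the conjugacy class
of a fixed permutation `σ₀`, realised as functions on that class. -/
def classConjRep (n : ℕ) (σ₀ : Equiv.Perm (Fin n)) :
    Representation ℂ (Equiv.Perm (Fin n)) ({τ : Equiv.Perm (Fin n) // IsConj σ₀ τ} → ℂ) where
  toFun g :=
    { toFun := fun f τ => f ⟨g⁻¹ * (τ : Equiv.Perm (Fin n)) * g,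
        τ.2.trans (isConj_iff.mpr ⟨g⁻¹, by group⟩)⟩
      map_add' := fun _ _ => rfl
      map_smul' := fun _ _ => rfl }
  map_one' := by
    ext f τ
    simp
  map_mul' g h :=
    LinearMap.ext fun f => funext fun τ => congrArg f (Subtype.ext (by group))

/-- The sign-isotypical component of the conjugation representation on the
conjugacy class of `σ₀`: the subspace of functions `f` with
`ρ(g) f = sign(g) · f` for all `g`. -/
noncomputable def signComponent (n : ℕ) (σ₀ : Equiv.Perm (Fin n)) :
    Submodule ℂ ({τ : Equiv.Perm (Fin n) // IsConj σ₀ τ} → ℂ) :=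
  ⨅ g : Equiv.Perm (Fin n),
    LinearMap.ker (classConjRep n σ₀ g - ((Equiv.Perm.sign g : ℤ) : ℂ) • LinearMap.id)


open Equiv Equiv.Perm Finset

section Combinatorics
set_option linter.unusedSectionVars false

variable {α : Type*} [Fintype α] [DecidableEq α]

lemma commute_apply {σ τ : Perm α} (h : Commute τ σ) (z : α) : τ (σ z) = σ (τ z) := by
  have := h.eq
  calc τ (σ z) = (τ * σ) z := rfl
  _ = (σ * τ) z := by rw [this]
  _ = σ (τ z) := rfl

lemma factor_support_invariant {σ c : Perm α} (hcom : Commute c σ) (z : α) :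
    σ z ∈ c.support ↔ z ∈ c.support := by
  simp only [Equiv.Perm.mem_support]
  rw [commute_apply hcom z]
  constructor
  · intro h h'; exact h (by rw [h'])
  · intro h h'; exact h (σ.injective h')

lemma sign_eq_one_of_commute_aux (N : ℕ) :
    ∀ (σ τ : Perm α), σ.support.card ≤ N → Commute τ σ →
      σ.cycleType.Nodup → (∀ k ∈ σ.cycleType, Odd k) →
      (∀ x, σ x = x → τ x = x) → Equiv.Perm.sign τ = 1 := by
  induction N with
  | zero =>
    intro σ τ hcard hcom hnd hodd hfix
    have hσ : σ = 1 := by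
      rw [← Equiv.Perm.support_eq_empty_iff]
      exact Finset.card_eq_zero.mp (Nat.le_zero.mp hcard)
    have : τ = 1 := Equiv.ext fun x => hfix x (by rw [hσ]; rfl)
    rw [this, map_one]
  | succ N ih =>
    intro σ τ hcard hcom hnd hodd hfix
    by_cases hσ1 : σ = 1
    · have : τ = 1 := Equiv.ext fun x => hfix x (by rw [hσ1]; rfl)
      rw [this, map_one]
    · -- pick a cycle factor c
      have hne : σ.cycleFactorsFinset.Nonempty := by
        rw [Finset.nonempty_iff_ne_empty, Ne, Equiv.Perm.cycleFactorsFinset_eq_empty_iff]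
        exact hσ1
      obtain ⟨c, hc⟩ := hne
      obtain ⟨hcyc, hsupp⟩ := Equiv.Perm.mem_cycleFactorsFinset_iff.mp hc
      have hcsupp : c.support.Nonempty := Finset.card_pos.mp
        (lt_of_lt_of_le (by norm_num) hcyc.two_le_card_support)
      obtain ⟨x, hx⟩ := hcsupp
      have hxσ : x ∈ σ.support := Equiv.Perm.mem_cycleFactorsFinset_support_le hc hx
      have hτx : τ x ∈ σ.support := by
        rw [Equiv.Perm.mem_support] at hxσ ⊢
        intro h
        rw [← commute_apply hcom x] at h
        exact hxσ (τ.injective h)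
      -- τ * c * τ⁻¹ is a cycle of σ
      have hconjσ : τ * σ * τ⁻¹ = σ := by rw [hcom.eq]; group
      have hconj : τ * c * τ⁻¹ ∈ σ.cycleFactorsFinset := by
        have := (Equiv.Perm.mem_cycleFactorsFinset_conj σ τ c).mpr hc
        rwa [hconjσ] at this
      have hτxc : τ x ∈ (τ * c * τ⁻¹).support := by
        rw [Equiv.Perm.support_conj]
        exact Finset.mem_map.mpr ⟨x, hx, rfl⟩
      -- equal support cards ⇒ equal cycles
      have hnd2 : (σ.cycleFactorsFinset.val.map (Finset.card ∘ Equiv.Perm.support)).Nodup := by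
        rw [← Equiv.Perm.cycleType_def]; exact hnd
      have hinj := Multiset.inj_on_of_nodup_map hnd2
      have hcc : τ * c * τ⁻¹ = c := by
        apply hinj _ (Finset.mem_def.mp hconj) _ (Finset.mem_def.mp hc)
        simp only [Function.comp_apply]
        exact Equiv.Perm.card_support_conj
      have hτc : Commute τ c := by
        have : τ * c = c * τ := by
          conv_rhs => rw [← hcc]
          group
        exact this
      rw [hcc] at hτxc
      -- τ x = c^j x for some j
      obtain ⟨j, hj⟩ := hcyc.sameCycle (Equiv.Perm.mem_support.mp hx)
        (Equiv.Perm.mem_support.mp hτxc)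
      -- τ agrees with c^j on the support of c
      have hcx : c = σ.cycleOf x := Equiv.Perm.cycle_is_cycleOf hx hc
      have hpt : ∀ z ∈ c.support, τ z = (c ^ j) z := by
        intro z hz
        have hxz : Equiv.Perm.SameCycle σ x z := by
          have := hz
          rw [hcx, Equiv.Perm.mem_support_cycleOf_iff] at this
          exact this.1
        obtain ⟨m, hm⟩ := hxz
        have hcj : (c ^ j) x = (σ ^ j) x := by
          rw [hcx]; exact Equiv.Perm.cycleOf_zpow_apply_self σ x j
        have hcz : (c ^ j) z = (σ ^ j) z := by
          rw [Equiv.Perm.cycle_is_cycleOf hz hc]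
          exact Equiv.Perm.cycleOf_zpow_apply_self σ z j
        have hcomm_m : τ ((σ ^ m) x) = (σ ^ m) (τ x) := commute_apply (hcom.zpow_right m) x
        calc τ z = τ ((σ ^ m) x) := by rw [hm]
        _ = (σ ^ m) (τ x) := hcomm_m
        _ = (σ ^ m) ((c ^ j) x) := by rw [hj]
        _ = (σ ^ m) ((σ ^ j) x) := by rw [hcj]
        _ = ((σ ^ m) * (σ ^ j)) x := rfl
        _ = ((σ ^ j) * (σ ^ m)) x := by rw [← zpow_add, ← zpow_add, add_comm]
        _ = (σ ^ j) ((σ ^ m) x) := rfl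
        _ = (σ ^ j) z := by rw [hm]
        _ = (c ^ j) z := hcz.symm
      -- pass to σ' = σ * c⁻¹ and τ' = τ * (c^j)⁻¹
      set σ' := σ * c⁻¹ with hσ'
      set τ' := τ * (c ^ j)⁻¹ with hτ'
      have hcσ : Commute c σ := Equiv.Perm.self_mem_cycle_factors_commute hc
      have hdisj : Equiv.Perm.Disjoint σ' c :=
        Equiv.Perm.disjoint_mul_inv_of_mem_cycleFactorsFinset hc
      have hfac' : σ'.cycleFactorsFinset = σ.cycleFactorsFinset \ {c} :=
        Equiv.Perm.cycleFactorsFinset_mul_inv_mem_eq_sdiff hc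
      have hsub : σ'.cycleFactorsFinset ⊆ σ.cycleFactorsFinset := by
        rw [hfac']; exact Finset.sdiff_subset
      have hle : σ'.cycleType ≤ σ.cycleType := by
        rw [Equiv.Perm.cycleType_def, Equiv.Perm.cycleType_def]
        exact Multiset.map_le_map (Finset.val_le_iff.mpr hsub)
      -- support card decreases
      have hsupp_eq : σ.support = σ'.support ∪ c.support := by
        have : σ' * c = σ := by rw [hσ']; group
        rw [← this, hdisj.support_mul]
      have hdisj_supp : _root_.Disjoint σ'.support c.support := hdisj.disjoint_support
      have hcard' : σ'.support.card + c.support.card ≤ N + 1 := by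
        rw [← Finset.card_union_of_disjoint hdisj_supp, ← hsupp_eq]
        exact hcard
      have hcard'' : σ'.support.card ≤ N := by
        have := hcyc.two_le_card_support
        omega
      -- commutation
      have hτ'σ' : Commute τ' σ' := by
        have h1 : Commute τ σ' := hcom.mul_right hτc.inv_right
        have h2 : Commute ((c ^ j)⁻¹) σ' :=
          ((hcσ.zpow_left j).inv_left).mul_right
            (((Commute.refl c).zpow_left j).inv_left).inv_right
        exact h1.mul_left h2
      -- fixed points
      have hfix' : ∀ z, σ' z = z → τ' z = z := by
        intro z hz
        by_cases hzc : z ∈ c.support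
        · have h1 : ((c ^ j)⁻¹) z ∈ c.support := by
            rw [← zpow_neg]
            exact (Equiv.Perm.zpow_apply_mem_support).mpr hzc
          have : τ' z = τ (((c ^ j)⁻¹) z) := rfl
          rw [this, hpt _ h1]
          simp
        · have hcz : c z = z := Equiv.Perm.notMem_support.mp hzc
          have hczj : (c ^ j) z = z := by
            apply Equiv.Perm.zpow_apply_eq_self_of_apply_eq_self hcz
          have hcinv : c⁻¹ z = z := by
            apply c.injective
            simp [hcz]
          have hσz : σ z = z := by
            have : σ' z = σ (c⁻¹ z) := rfl
            rw [this, hcinv] at hz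
            exact hz
          have : τ' z = τ (((c ^ j)⁻¹) z) := rfl
          rw [this, ← hczj]
          simp only [← Equiv.Perm.mul_apply, inv_mul_cancel, Equiv.Perm.one_apply]
          rw [hczj]
          exact hfix z hσz
      have hsigτ' : Equiv.Perm.sign τ' = 1 :=
        ih σ' τ' hcard'' hτ'σ' (Multiset.nodup_of_le hle hnd)
          (fun k hk => hodd k (Multiset.mem_of_le hle hk)) hfix'
      -- sign of c
      have hk_mem : c.support.card ∈ σ.cycleType := by
        rw [Equiv.Perm.cycleType_def]
        exact Multiset.mem_map_of_mem _ (Finset.mem_def.mp hc)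
      have hkodd : Odd c.support.card := hodd _ hk_mem
      have hsignc : Equiv.Perm.sign c = 1 := by
        rw [hcyc.sign, hkodd.neg_one_pow, neg_neg]
      have hτeq : τ = τ' * c ^ j := by rw [hτ']; group
      rw [hτeq, map_mul, hsigτ', map_zpow, hsignc, one_zpow, one_mul]


lemma sign_eq_one_of_commute' {σ τ : Perm α} (hcom : Commute τ σ)
    (hnd : σ.cycleType.Nodup) (hodd : ∀ k ∈ σ.cycleType, Odd k)
    (hfp : Fintype.card α - σ.support.card ≤ 1) : Equiv.Perm.sign τ = 1 := by
  apply sign_eq_one_of_commute_aux σ.support.card σ τ le_rfl hcom hnd hodd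
  intro x hx
  by_contra h
  have h1 : x ∈ σ.supportᶜ := by
    simp [Equiv.Perm.mem_support, hx]
  have h2 : τ x ∈ σ.supportᶜ := by
    simp only [Finset.mem_compl, Equiv.Perm.mem_support, not_not]
    rw [← commute_apply hcom x, hx]
  have hlt : 1 < σ.supportᶜ.card :=
    Finset.one_lt_card.mpr ⟨τ x, h2, x, h1, h⟩
  rw [Finset.card_compl] at hlt
  have := Finset.card_le_univ σ.support
  omega

lemma odd_of_centralizer_even {σ : Perm α}
    (h : ∀ τ : Perm α, Commute τ σ → Equiv.Perm.sign τ = 1) :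
    ∀ k ∈ σ.cycleType, Odd k := by
  intro k hk
  rw [Equiv.Perm.cycleType_def, Multiset.mem_map] at hk
  obtain ⟨c, hc, hck⟩ := hk
  have hc' : c ∈ σ.cycleFactorsFinset := hc
  have hcyc := (Equiv.Perm.mem_cycleFactorsFinset_iff.mp hc').1
  have hsign := h c (Equiv.Perm.self_mem_cycle_factors_commute hc')
  rw [hcyc.sign] at hsign
  rw [← hck]
  simp only [Function.comp_apply]
  by_contra heven
  rw [Nat.not_odd_iff_even] at heven
  rw [heven.neg_one_pow] at hsign
  exact absurd hsign (by decide)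

lemma fixed_le_one_of_centralizer_even {σ : Perm α}
    (h : ∀ τ : Perm α, Commute τ σ → Equiv.Perm.sign τ = 1) :
    Fintype.card α - σ.support.card ≤ 1 := by
  by_contra hfp
  have hlt : 1 < σ.supportᶜ.card := by
    rw [Finset.card_compl]; omega
  obtain ⟨a, ha, b, hb, hab⟩ := Finset.one_lt_card.mp hlt
  rw [Finset.mem_compl, Equiv.Perm.notMem_support] at ha hb
  have hcomm : Commute (Equiv.swap a b) σ := by
    have : ∀ z, (Equiv.swap a b) (σ z) = σ ((Equiv.swap a b) z) := by
      intro z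
      by_cases hza : z = a
      · subst hza
        rw [ha, Equiv.swap_apply_left, hb]
      by_cases hzb : z = b
      · subst hzb
        rw [hb, Equiv.swap_apply_right, ha]
      have h1 : σ z ≠ a := fun hh => hza (σ.injective (by rw [hh, ha]))
      have h2 : σ z ≠ b := fun hh => hzb (σ.injective (by rw [hh, hb]))
      rw [Equiv.swap_apply_of_ne_of_ne hza hzb, Equiv.swap_apply_of_ne_of_ne h1 h2]
    exact Equiv.ext fun z => this z
  have := h _ hcomm
  rw [Equiv.Perm.sign_swap hab] at this
  exact absurd this (by decide)

lemma nodup_of_centralizer_even {σ : Perm α}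
    (h : ∀ τ : Perm α, Commute τ σ → Equiv.Perm.sign τ = 1) :
    σ.cycleType.Nodup := by
  by_contra hnd
  rw [Equiv.Perm.cycleType_def,
    Multiset.nodup_map_iff_inj_on σ.cycleFactorsFinset.nodup] at hnd
  push_neg at hnd
  obtain ⟨c₁, hc₁, c₂, hc₂, hcard, hne⟩ := hnd
  have hc₁' : c₁ ∈ σ.cycleFactorsFinset := hc₁
  have hc₂' : c₂ ∈ σ.cycleFactorsFinset := hc₂
  obtain ⟨hcyc₁, hs₁⟩ := Equiv.Perm.mem_cycleFactorsFinset_iff.mp hc₁'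
  obtain ⟨hcyc₂, hs₂⟩ := Equiv.Perm.mem_cycleFactorsFinset_iff.mp hc₂'
  simp only [Function.comp_apply] at hcard
  set k := c₁.support.card with hk
  have hkodd : Odd k := odd_of_centralizer_even h k
    (by rw [Equiv.Perm.cycleType_def]; exact Multiset.mem_map_of_mem _ hc₁)
  have hdisj : _root_.Disjoint c₁.support c₂.support :=
    (Equiv.Perm.cycleFactorsFinset_pairwise_disjoint σ hc₁' hc₂' hne).disjoint_support
  obtain ⟨g, hg⟩ := isConj_iff.mp (hcyc₁.isConj hcyc₂ hcard)
  have hgc : g * c₁ = c₂ * g := by rw [← hg]; group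
  have hgsupp : c₂.support = c₁.support.map g.toEmbedding := by
    rw [← hg, Equiv.Perm.support_conj]
  have hg1 : ∀ z ∈ c₁.support, g z ∈ c₂.support := by
    intro z hz; rw [hgsupp]; exact Finset.mem_map.mpr ⟨z, hz, rfl⟩
  have hg2 : ∀ z ∈ c₂.support, g⁻¹ z ∈ c₁.support := by
    intro z hz
    rw [hgsupp] at hz
    obtain ⟨w, hw, hwz⟩ := Finset.mem_map.mp hz
    have hzw : g⁻¹ z = w := by
      apply g.injective; simp [← hwz]
    rw [hzw]; exact hw
  set p : α → α := fun z =>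
    if z ∈ c₁.support then g z else if z ∈ c₂.support then g⁻¹ z else z with hp
  have hinv : Function.Involutive p := by
    intro z
    by_cases h1 : z ∈ c₁.support
    · have hgz := hg1 z h1
      have hgz1 : g z ∉ c₁.support := Finset.disjoint_right.mp hdisj hgz
      simp only [hp]
      rw [if_pos h1, if_neg hgz1, if_pos hgz]
      simp
    by_cases h2 : z ∈ c₂.support
    · have hgz := hg2 z h2
      simp only [hp]
      rw [if_neg h1, if_pos h2, if_pos hgz]
      simp
    · simp only [hp]
      rw [if_neg h1, if_neg h2, if_neg h1, if_neg h2]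
  set π := hinv.toPerm with hπdef
  have hπapp : ∀ z, π z = p z := fun z => rfl
  -- σ-invariance of supports
  have hinv1 : ∀ z, σ z ∈ c₁.support ↔ z ∈ c₁.support :=
    factor_support_invariant (Equiv.Perm.self_mem_cycle_factors_commute hc₁')
  have hinv2 : ∀ z, σ z ∈ c₂.support ↔ z ∈ c₂.support :=
    factor_support_invariant (Equiv.Perm.self_mem_cycle_factors_commute hc₂')
  have hcomm : Commute π σ := by
    have key : ∀ z, π (σ z) = σ (π z) := by
      intro z
      by_cases h1 : z ∈ c₁.support
      · have hσz : σ z = c₁ z := (hs₁ z h1).symm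
        have hc₁z : c₁ z ∈ c₁.support := Equiv.Perm.apply_mem_support.mpr h1
        have hπσ : π (σ z) = g (c₁ z) := by
          rw [hσz, hπapp]; simp only [hp]; rw [if_pos hc₁z]
        have hgz := hg1 z h1
        have hπz : π z = g z := by rw [hπapp]; simp only [hp]; rw [if_pos h1]
        rw [hπσ, hπz, ← (hs₂ _ hgz)]
        calc g (c₁ z) = (g * c₁) z := rfl
        _ = (c₂ * g) z := by rw [hgc]
        _ = c₂ (g z) := rfl
      by_cases h2 : z ∈ c₂.support
      · have hσz : σ z = c₂ z := (hs₂ z h2).symm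
        have hc₂z : c₂ z ∈ c₂.support := Equiv.Perm.apply_mem_support.mpr h2
        have hc₂z1 : c₂ z ∉ c₁.support := Finset.disjoint_right.mp hdisj hc₂z
        have hπσ : π (σ z) = g⁻¹ (c₂ z) := by
          rw [hσz, hπapp]; simp only [hp]; rw [if_neg hc₂z1, if_pos hc₂z]
        have hgz := hg2 z h2
        have hπz : π z = g⁻¹ z := by
          rw [hπapp]; simp only [hp]; rw [if_neg h1, if_pos h2]
        rw [hπσ, hπz, ← (hs₁ _ hgz)]
        have : g⁻¹ * c₂ = c₁ * g⁻¹ := by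
          rw [← hg]; group
        calc g⁻¹ (c₂ z) = (g⁻¹ * c₂) z := rfl
        _ = (c₁ * g⁻¹) z := by rw [this]
        _ = c₁ (g⁻¹ z) := rfl
      · have hσ1 : σ z ∉ c₁.support := fun hh => h1 ((hinv1 z).mp hh)
        have hσ2 : σ z ∉ c₂.support := fun hh => h2 ((hinv2 z).mp hh)
        have hπσ : π (σ z) = σ z := by
          rw [hπapp]; simp only [hp]; rw [if_neg hσ1, if_neg hσ2]
        have hπz : π z = z := by
          rw [hπapp]; simp only [hp]; rw [if_neg h1, if_neg h2]
        rw [hπσ, hπz]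
    exact Equiv.ext fun z => key z
  -- the support of π
  have hπsupp : π.support = c₁.support ∪ c₂.support := by
    ext z
    rw [Equiv.Perm.mem_support, Finset.mem_union]
    constructor
    · intro hz
      by_contra hcon
      push_neg at hcon
      apply hz
      rw [hπapp]; simp only [hp]; rw [if_neg hcon.1, if_neg hcon.2]
    · intro hz
      rcases hz with h1 | h2
      · have := hg1 z h1
        rw [hπapp]; simp only [hp]; rw [if_pos h1]
        intro hh
        rw [hh] at this
        exact Finset.disjoint_left.mp hdisj h1 this
      · by_cases h1 : z ∈ c₁.support
        · have := hg1 z h1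
          rw [hπapp]; simp only [hp]; rw [if_pos h1]
          intro hh
          rw [hh] at this
          exact Finset.disjoint_left.mp hdisj h1 this
        · have := hg2 z h2
          rw [hπapp]; simp only [hp]; rw [if_neg h1, if_pos h2]
          intro hh
          rw [hh] at this
          exact h1 this
  have hπcard : π.support.card = k + k := by
    rw [hπsupp, Finset.card_union_of_disjoint hdisj, ← hcard]
  -- π is an involution: all cycles have length 2
  have hπ2 : π ^ 2 = 1 := by
    ext z
    simp only [pow_two, Equiv.Perm.mul_apply, Equiv.Perm.one_apply]
    rw [hπapp, hπapp]
    exact hinv z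
  have hord : orderOf π ∣ 2 := orderOf_dvd_of_pow_eq_one hπ2
  have hall2 : ∀ a ∈ π.cycleType, a = 2 := by
    intro a ha
    have h2a := Equiv.Perm.two_le_of_mem_cycleType ha
    have hdvd : a ∣ 2 := dvd_trans (by rw [← Equiv.Perm.lcm_cycleType]; exact Multiset.dvd_lcm ha) hord
    have := Nat.le_of_dvd (by norm_num) hdvd
    omega
  have hsum : π.cycleType.sum = k + k := by
    rw [Equiv.Perm.sum_cycleType, hπcard]
  have hrep : π.cycleType = Multiset.replicate π.cycleType.card 2 :=
    Multiset.eq_replicate_card.mpr hall2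
  have hcardk : π.cycleType.card = k := by
    have : π.cycleType.sum = π.cycleType.card * 2 := by
      rw [hrep]
      simp [Multiset.sum_replicate, mul_comm]
    omega
  have hsign := h π hcomm
  rw [Equiv.Perm.sign_of_cycleType, hsum, hcardk] at hsign
  have hodd3 : Odd (k + k + k) := by
    obtain ⟨m, hm⟩ := hkodd
    exact ⟨3 * m + 1, by omega⟩
  rw [hodd3.neg_one_pow] at hsign
  exact absurd hsign (by decide)

end Combinatorics

namespace SignComponentAux

noncomputable def s {n : ℕ} (g : Equiv.Perm (Fin n)) : ℂ := ((Equiv.Perm.sign g : ℤ) : ℂ)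

lemma s_cases {n : ℕ} (g : Equiv.Perm (Fin n)) : s g = 1 ∨ s g = -1 := by
  rcases Int.units_eq_one_or (Equiv.Perm.sign g) with h | h <;>
    simp [s, h]

lemma s_ne_zero {n : ℕ} (g : Equiv.Perm (Fin n)) : s g ≠ 0 := by
  rcases s_cases g with h | h <;> rw [h] <;> norm_num

lemma s_mul {n : ℕ} (g h : Equiv.Perm (Fin n)) : s (g * h) = s g * s h := by
  simp only [s, map_mul]
  push_cast
  ring

lemma s_mul_self {n : ℕ} (g : Equiv.Perm (Fin n)) : s g * s g = 1 := by
  rcases s_cases g with h | h <;> rw [h] <;> norm_num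

lemma s_inv {n : ℕ} (g : Equiv.Perm (Fin n)) : s g⁻¹ = s g := by
  have h1 : s g⁻¹ * s g = 1 := by rw [← s_mul]; simp [s]
  have h2 := s_mul_self g
  have h3 : s g⁻¹ * s g = s g * s g := by rw [h1, h2]
  exact mul_right_cancel₀ (s_ne_zero g) h3

lemma s_eq_one_iff {n : ℕ} (g : Equiv.Perm (Fin n)) :
    s g = 1 ↔ Equiv.Perm.sign g = 1 := by
  constructor
  · intro h
    rcases Int.units_eq_one_or (Equiv.Perm.sign g) with h' | h'
    · exact h'
    · exfalso
      rw [s, h'] at h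
      norm_num at h
  · intro h; rw [s, h]; norm_num

lemma mem_signComponent_iff {n : ℕ} {σ₀ : Equiv.Perm (Fin n)}
    {f : {τ : Equiv.Perm (Fin n) // IsConj σ₀ τ} → ℂ} :
    f ∈ signComponent n σ₀ ↔ ∀ (g : Equiv.Perm (Fin n))
      (τ : {τ : Equiv.Perm (Fin n) // IsConj σ₀ τ}),
      f ⟨g⁻¹ * (τ : Equiv.Perm (Fin n)) * g,
        τ.2.trans (isConj_iff.mpr ⟨g⁻¹, by group⟩)⟩ = s g * f τ := by
  unfold signComponent
  rw [Submodule.mem_iInf]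
  apply forall_congr'
  intro g
  rw [LinearMap.mem_ker, LinearMap.sub_apply, sub_eq_zero, LinearMap.smul_apply,
    LinearMap.id_apply]
  constructor
  · intro hh τ
    have := congrFun hh τ
    simpa [classConjRep, s] using this
  · intro hh
    funext τ
    simpa [classConjRep, s] using hh τ

end SignComponentAux

open SignComponentAux in
lemma signComponent_ne_bot_iff (n : ℕ) (σ₀ : Equiv.Perm (Fin n)) :
    signComponent n σ₀ ≠ ⊥ ↔
      ∀ τ : Equiv.Perm (Fin n), Commute τ σ₀ → Equiv.Perm.sign τ = 1 := by
  constructor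
  · intro h υ hυ
    obtain ⟨f, hf, hf0⟩ := (Submodule.ne_bot_iff _).mp h
    have hex : ∃ τ₁, f τ₁ ≠ 0 := by
      by_contra hcon
      push_neg at hcon
      exact hf0 (funext fun τ => hcon τ)
    obtain ⟨τ₁, hτ₁⟩ := hex
    obtain ⟨c, hc⟩ := isConj_iff.mp τ₁.2
    set g := c * υ * c⁻¹ with hg
    have hgτ : g⁻¹ * τ₁.1 * g = τ₁.1 := by
      rw [hg, ← hc]
      have hσ : υ⁻¹ * σ₀ * υ = σ₀ := by
        rw [mul_assoc, ← hυ.eq]; group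
      calc (c * υ * c⁻¹)⁻¹ * (c * σ₀ * c⁻¹) * (c * υ * c⁻¹)
          = c * (υ⁻¹ * σ₀ * υ) * c⁻¹ := by group
      _ = c * σ₀ * c⁻¹ := by rw [hσ]
    have hmem := mem_signComponent_iff.mp hf g τ₁
    have heq : (⟨g⁻¹ * τ₁.1 * g, τ₁.2.trans (isConj_iff.mpr ⟨g⁻¹, by group⟩)⟩ :
        {τ : Equiv.Perm (Fin n) // IsConj σ₀ τ}) = τ₁ := Subtype.ext hgτ
    rw [heq] at hmem
    have hsg : s g = 1 := by
      have : s g * f τ₁ = 1 * f τ₁ := by rw [one_mul, ← hmem]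
      exact mul_right_cancel₀ hτ₁ this
    have hsigng : Equiv.Perm.sign g = 1 := (s_eq_one_iff g).mp hsg
    have : Equiv.Perm.sign g = Equiv.Perm.sign υ := by
      rw [hg, map_mul, map_mul, map_inv]
      rw [mul_comm (Equiv.Perm.sign c) (Equiv.Perm.sign υ), mul_assoc]
      simp
    rw [← this, hsigng]
  · intro h
    rw [Submodule.ne_bot_iff]
    classical
    refine ⟨fun τ => s (Classical.choose (isConj_iff.mp τ.2)), ?_, ?_⟩
    · rw [mem_signComponent_iff]
      intro g τ
      set c := Classical.choose (isConj_iff.mp τ.2) with hcdef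
      have hc : c * σ₀ * c⁻¹ = τ.1 := Classical.choose_spec (isConj_iff.mp τ.2)
      set τ' : {τ : Equiv.Perm (Fin n) // IsConj σ₀ τ} :=
        ⟨g⁻¹ * (τ : Equiv.Perm (Fin n)) * g,
          τ.2.trans (isConj_iff.mpr ⟨g⁻¹, by group⟩)⟩ with hτ'def
      set c' := Classical.choose (isConj_iff.mp τ'.2) with hc'def
      have hc' : c' * σ₀ * c'⁻¹ = g⁻¹ * τ.1 * g :=
        Classical.choose_spec (isConj_iff.mp τ'.2)
      have hυ : Commute (c⁻¹ * g * c') σ₀ := by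
      -- conjugation equation
        have h1 : (c⁻¹ * g * c') * σ₀ * (c⁻¹ * g * c')⁻¹ = σ₀ := by
          have h2 : c' * σ₀ * c'⁻¹ = g⁻¹ * (c * σ₀ * c⁻¹) * g := by rw [hc, hc']
          calc (c⁻¹ * g * c') * σ₀ * (c⁻¹ * g * c')⁻¹
              = c⁻¹ * g * (c' * σ₀ * c'⁻¹) * g⁻¹ * c := by group
          _ = c⁻¹ * g * (g⁻¹ * (c * σ₀ * c⁻¹) * g) * g⁻¹ * c := by rw [h2]
          _ = σ₀ := by group
        exact mul_inv_eq_iff_eq_mul.mp h1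
      have hsυ : s (c⁻¹ * g * c') = 1 := (s_eq_one_iff _).mpr (h _ hυ)
      have hc'eq : c' = g⁻¹ * (c * (c⁻¹ * g * c')) := by group
      show s c' = s g * s c
      rw [hc'eq, s_mul, s_mul, s_inv, hsυ, mul_one, mul_comm]
    · intro hcon
      exact s_ne_zero _ (congrFun hcon ⟨σ₀, IsConj.refl σ₀⟩)

open SignComponentAux in
lemma finrank_signComponent (n : ℕ) (σ₀ : Equiv.Perm (Fin n))
    (h : signComponent n σ₀ ≠ ⊥) : Module.finrank ℂ (signComponent n σ₀) = 1 := by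
  classical
  set f₀ : {τ : Equiv.Perm (Fin n) // IsConj σ₀ τ} → ℂ :=
    fun τ => s (Classical.choose (isConj_iff.mp τ.2)) with hf₀
  have hf₀ne : f₀ ≠ 0 := fun hcon => s_ne_zero _ (congrFun hcon ⟨σ₀, IsConj.refl σ₀⟩)
  have hle : signComponent n σ₀ ≤ Submodule.span ℂ {f₀} := by
    intro f hf
    rw [Submodule.mem_span_singleton]
    refine ⟨f ⟨σ₀, IsConj.refl σ₀⟩, ?_⟩
    funext τ
    set c := Classical.choose (isConj_iff.mp τ.2) with hcdef
    have hc : c * σ₀ * c⁻¹ = τ.1 := Classical.choose_spec (isConj_iff.mp τ.2)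
    have hmem := mem_signComponent_iff.mp hf c τ
    have heq : (⟨c⁻¹ * (τ : Equiv.Perm (Fin n)) * c,
        τ.2.trans (isConj_iff.mpr ⟨c⁻¹, by group⟩)⟩ :
        {τ : Equiv.Perm (Fin n) // IsConj σ₀ τ}) = ⟨σ₀, IsConj.refl σ₀⟩ := by
      apply Subtype.ext
      show c⁻¹ * τ.1 * c = σ₀
      rw [← hc]; group
    rw [heq] at hmem
    have hval : s c * f ⟨σ₀, IsConj.refl σ₀⟩ = f τ := by
      rw [hmem, ← mul_assoc, s_mul_self, one_mul]
    simp only [Pi.smul_apply, smul_eq_mul, hf₀]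
    rw [← hval]
    ring
  haveI : Fintype {τ : Equiv.Perm (Fin n) // IsConj σ₀ τ} := Fintype.ofFinite _
  have h1 : Module.finrank ℂ (signComponent n σ₀) ≤ 1 := by
    calc Module.finrank ℂ (signComponent n σ₀)
        ≤ Module.finrank ℂ (Submodule.span ℂ {f₀}) := Submodule.finrank_mono hle
    _ = 1 := finrank_span_singleton hf₀ne
  have h2 : Module.finrank ℂ (signComponent n σ₀) ≠ 0 := by
    intro h0
    exact h (Submodule.finrank_eq_zero.mp h0)
  omega

lemma replicate_nodup_iff {a m : ℕ} : (Multiset.replicate m a).Nodup ↔ m ≤ 1 := by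
  constructor
  · intro h
    have := Multiset.nodup_iff_count_le_one.mp h a
    rwa [Multiset.count_replicate_self] at this
  · intro h
    interval_cases m
    · simp
    · simp

/-- The sign representation occurs in the conjugation representation on the
class of `σ₀` iff the centraliser of `σ₀` consists of even permutations, iff
the partition of `σ₀` (its cycle type, padded with fixed points) has distinct
odd parts; and when it occurs, it occurs with multiplicity exactly one. -/
theorem stmt_18 (n : ℕ) (σ₀ : Equiv.Perm (Fin n)) :
    ((signComponent n σ₀ ≠ ⊥) ↔
      ∀ τ : Equiv.Perm (Fin n), τ * σ₀ = σ₀ * τ → Equiv.Perm.sign τ = 1) ∧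
    ((signComponent n σ₀ ≠ ⊥) ↔
      (σ₀.partition.parts.Nodup ∧ ∀ k ∈ σ₀.partition.parts, Odd k)) ∧
    ((signComponent n σ₀ ≠ ⊥) → Module.finrank ℂ (signComponent n σ₀) = 1) := by
  have hA := signComponent_ne_bot_iff n σ₀
  have hcomb : (∀ τ : Equiv.Perm (Fin n), Commute τ σ₀ → Equiv.Perm.sign τ = 1) ↔
      (σ₀.partition.parts.Nodup ∧ ∀ k ∈ σ₀.partition.parts, Odd k) := by
    constructor
    · intro h
      constructor
      · rw [Equiv.Perm.parts_partition, Multiset.nodup_add]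
        refine ⟨nodup_of_centralizer_even h, ?_, ?_⟩
        · exact replicate_nodup_iff.mpr (fixed_le_one_of_centralizer_even h)
        · rw [Multiset.disjoint_left]
          intro a ha hrep
          have h1 : a = 1 := Multiset.eq_of_mem_replicate hrep
          have h2 := Equiv.Perm.two_le_of_mem_cycleType ha
          omega
      · intro k hk
        rw [Equiv.Perm.parts_partition, Multiset.mem_add] at hk
        rcases hk with hk | hk
        · exact odd_of_centralizer_even h k hk
        · rw [Multiset.eq_of_mem_replicate hk]
          exact odd_one
    · rintro ⟨hnd, hodd⟩ τ hτ
      rw [Equiv.Perm.parts_partition, Multiset.nodup_add] at hnd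
      apply sign_eq_one_of_commute' hτ hnd.1
      · intro k hk
        apply hodd
        rw [Equiv.Perm.parts_partition, Multiset.mem_add]
        exact Or.inl hk
      · exact replicate_nodup_iff.mp hnd.2.1
  exact ⟨hA, hA.trans hcomb, finrank_signComponent n σ₀⟩
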